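/- The linear map ⋀²ℂ⁷ → ⋀⁶ℂ⁷ given by w ↦ w∧ω₀ is surjective; equivalently, its kernel { w ∈ ⋀²ℂ⁷ : w∧ω₀ = 0 } has dimension 14. (Thus the variety Ĝ₂ of ω₀-isotropic 2-planes has linear span a ℙ¹³ inside the Plücker space ℙ(⋀²ℂ⁷).) -/

import Mathlib

open ExteriorAlgebra

noncomputable section

/-- The standard basis 1-vectors `eᵢ` of `⋀¹ℂ⁷` (indexed from 0, so `e 0 = e₁`, …, `e 6 = e₇`). -/
def e (i : Fin 7) : ExteriorAlgebra ℂ (Fin 7 → ℂ) := ι ℂ (Pi.single i 1)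

/-- The degenerate 4-form
`ω₀ = e₁∧e₂∧e₃∧e₇ + e₄∧e₅∧e₆∧e₇ + e₂∧e₃∧e₅∧e₆ + e₁∧e₃∧e₄∧e₆`. -/
def ω₀ : ExteriorAlgebra ℂ (Fin 7 → ℂ) :=
  e 0 * e 1 * e 2 * e 6 + e 3 * e 4 * e 5 * e 6 + e 1 * e 2 * e 4 * e 5 + e 0 * e 2 * e 3 * e 5

namespace Stmt9

abbrev V := Fin 7 → ℂ

def b : Fin 7 → V := fun i => Pi.single i 1

/-! ### Algebra computation lemmas -/

lemma e_sq (i : Fin 7) : e i * e i = 0 := ι_sq_zero _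

lemma e_swap {i j : Fin 7} (_ : j < i) : e i * e j = -(e j * e i) := by
  have := ι_add_mul_swap (R := ℂ) (M := V) (Pi.single i 1) (Pi.single j 1)
  rw [eq_neg_iff_add_eq_zero]; exact this

lemma e_sq' (i : Fin 7) (x : ExteriorAlgebra ℂ V) : e i * (e i * x) = 0 := by
  rw [← mul_assoc, e_sq, zero_mul]

lemma e_swap' {i j : Fin 7} (h : j < i) (x : ExteriorAlgebra ℂ V) :
    e i * (e j * x) = -(e j * (e i * x)) := by
  rw [← mul_assoc, e_swap h, neg_mul, mul_assoc]

/-! ### Dual functionals -/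

def F (n : ℕ) (s : Fin n → Fin 7) : V [⋀^Fin n]→ₗ[ℂ] ℂ :=
  (Matrix.detRowAlternating).compLinearMap (LinearMap.funLeft ℂ ℂ s)

def φ (n : ℕ) (s : Fin n → Fin 7) : ExteriorAlgebra ℂ V →ₗ[ℂ] ℂ :=
  liftAlternating (Function.update 0 n (F n s))

lemma φ_ιMulti (n : ℕ) (s : Fin n → Fin 7) (v : Fin n → V) :
    φ n s (ιMulti ℂ n v) = Matrix.det (Matrix.of fun i j => v i (s j)) := by
  rw [φ, liftAlternating_apply_ιMulti, Function.update_self]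
  rfl

lemma exists_not_mem_range {n : ℕ} {t s : Fin n → Fin 7} (ht : Function.Injective t)
    (hs : Function.Injective s) (hne : Set.range t ≠ Set.range s) :
    ∃ i, ∀ j, t i ≠ s j := by
  by_contra h
  push_neg at h
  apply hne
  have hsub : Finset.univ.image t ⊆ Finset.univ.image s := by
    intro x hx
    simp only [Finset.mem_image, Finset.mem_univ, true_and] at hx ⊢
    obtain ⟨i, rfl⟩ := hx
    obtain ⟨j, hj⟩ := h i
    exact ⟨j, hj.symm⟩
  have hcard : (Finset.univ.image s).card ≤ (Finset.univ.image t).card := by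
    rw [Finset.card_image_of_injective _ ht, Finset.card_image_of_injective _ hs]
  have := Finset.eq_of_subset_of_card_le hsub hcard
  have h1 : Set.range t = ↑(Finset.univ.image t) := by
    simp [Finset.coe_image, Set.image_univ]
  have h2 : Set.range s = ↑(Finset.univ.image s) := by
    simp [Finset.coe_image, Set.image_univ]
  rw [h1, h2, this]

lemma pairing_det {n : ℕ} (t s : Fin n → Fin 7) (ht : StrictMono t) (hs : StrictMono s) :
    Matrix.det (Matrix.of fun i j => b (t i) (s j)) = if t = s then 1 else 0 := by
  have hmat : ∀ i j, b (t i) (s j) = if t i = s j then (1:ℂ) else 0 := by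
    intro i j
    rw [show b (t i) = Pi.single (t i) 1 from rfl, Pi.single_apply]
    simp [eq_comm]
  split_ifs with h
  · subst h
    have : (Matrix.of fun i j => b (t i) (t j)) = 1 := by
      ext i j
      rw [Matrix.one_apply, Matrix.of_apply, hmat]
      simp [ht.injective.eq_iff]
    rw [this, Matrix.det_one]
  · have hne : Set.range t ≠ Set.range s := by
      haveI : WellFoundedLT (Fin n) := inferInstance
      exact fun hr => h ((ht.range_inj hs).1 hr)
    obtain ⟨i, hi⟩ := exists_not_mem_range ht.injective hs.injective hne
    apply Matrix.det_eq_zero_of_row_eq_zero i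
    intro j
    rw [Matrix.of_apply, hmat]
    simp [hi j]

/-! ### The spanning families -/

def B (n : ℕ) (s : {s : Fin n → Fin 7 // StrictMono s}) : ExteriorAlgebra ℂ V :=
  ιMulti ℂ n (b ∘ s.1)

lemma ιMulti_sorted_mem_span {n : ℕ} {r : Fin n → Fin 7} (hr : Function.Injective r) :
    ιMulti ℂ n (b ∘ r) ∈ Submodule.span ℂ (Set.range (B n)) := by
  classical
  set fs : Finset (Fin 7) := Finset.univ.image r with hfs
  have hcard : fs.card = n := by
    rw [hfs, Finset.card_image_of_injective _ hr, Finset.card_univ, Fintype.card_fin]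
  set t : Fin n → Fin 7 := fun i => ((fs.orderIsoOfFin hcard) i : Fin 7) with hto
  have htmono : StrictMono t := fun i j hij => by
    exact (fs.orderIsoOfFin hcard).strictMono hij
  have hmem : ∀ i, r i ∈ fs := fun i => Finset.mem_image_of_mem _ (Finset.mem_univ i)
  set σ : Fin n → Fin n := fun i => (fs.orderIsoOfFin hcard).symm ⟨r i, hmem i⟩ with hσ
  have hts : ∀ i, t (σ i) = r i := by
    intro i
    rw [hto, hσ]
    simp
  have hσinj : Function.Injective σ := by
    intro i j hij
    apply hr
    rw [← hts i, ← hts j, hij]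
  have hσbij : Function.Bijective σ := Finite.injective_iff_bijective.1 hσinj
  set σe : Equiv.Perm (Fin n) := Equiv.ofBijective σ hσbij with hσe
  have hcomp : b ∘ r = (b ∘ t) ∘ σe := by
    funext i
    simp [hσe, Equiv.ofBijective_apply, hts i]
  rw [hcomp]
  rw [AlternatingMap.map_perm]
  have hbase : ιMulti ℂ n (b ∘ t) ∈ Submodule.span ℂ (Set.range (B n)) :=
    Submodule.subset_span ⟨⟨t, htmono⟩, rfl⟩
  rcases Int.units_eq_one_or (Equiv.Perm.sign σe) with h | h <;> rw [h]
  · rwa [one_smul]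
  · rw [Units.smul_def]
    simpa using Submodule.neg_mem _ hbase

lemma ιMulti_mem_span {n : ℕ} (v : Fin n → V) :
    ιMulti ℂ n v ∈ Submodule.span ℂ (Set.range (B n)) := by
  classical
  have hv : v = fun i => ∑ j, v i j • b j := by
    funext i
    rw [show (∑ j, v i j • b j) = ∑ j, v i j • fun k => if j = k then (1:ℂ) else 0 by
      refine Finset.sum_congr rfl fun j _ => ?_
      congr 1
      funext k
      simp [b, Pi.single_apply, eq_comm]]
    exact pi_eq_sum_univ (v i)
  rw [show ιMulti ℂ n v = (ιMulti ℂ n).toMultilinearMap v from rfl, hv]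
  rw [MultilinearMap.map_sum]
  apply Submodule.sum_mem
  intro r _
  rw [MultilinearMap.map_smul_univ]
  apply Submodule.smul_mem
  by_cases hr : Function.Injective r
  · exact ιMulti_sorted_mem_span hr
  · rw [Function.not_injective_iff] at hr
    obtain ⟨i, j, hij, hne⟩ := hr
    have : (ιMulti ℂ n).toMultilinearMap (fun i => b (r i)) = ιMulti ℂ n (b ∘ r) := rfl
    rw [this, AlternatingMap.map_eq_zero_of_eq _ _ (by simp [hij]) hne]
    exact Submodule.zero_mem _

lemma span_B (n : ℕ) : Submodule.span ℂ (Set.range (B n)) = ⋀[ℂ]^n V := by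
  apply le_antisymm
  · rw [Submodule.span_le]
    rintro _ ⟨s, rfl⟩
    exact ιMulti_range ℂ n ⟨b ∘ s.1, rfl⟩
  · rw [← ιMulti_span_fixedDegree]
    rw [Submodule.span_le]
    rintro _ ⟨v, rfl⟩
    exact ιMulti_mem_span v

lemma pairing (n : ℕ) (t s : {s : Fin n → Fin 7 // StrictMono s}) :
    φ n s.1 (B n t) = if t = s then 1 else 0 := by
  rw [B, φ_ιMulti]
  rw [show (Matrix.of fun i j => (b ∘ t.1) i (s.1 j)) = Matrix.of fun i j => b (t.1 i) (s.1 j)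
    from rfl]
  rw [pairing_det t.1 s.1 t.2 s.2]
  simp [Subtype.ext_iff]

lemma linIndep_B (n : ℕ) : LinearIndependent ℂ (B n) := by
  classical
  rw [Fintype.linearIndependent_iff]
  intro g hg s
  have := congrArg (φ n s.1) hg
  rw [map_sum, map_zero] at this
  simp only [map_smul, pairing, smul_eq_mul, mul_ite, mul_one, mul_zero] at this
  rwa [Finset.sum_ite_eq' Finset.univ s g, if_pos (Finset.mem_univ s)] at this

lemma B_mem (n : ℕ) (s : {s : Fin n → Fin 7 // StrictMono s}) : B n s ∈ ⋀[ℂ]^n V :=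
  ιMulti_range ℂ n ⟨b ∘ s.1, rfl⟩

def Bsub (n : ℕ) (s : {s : Fin n → Fin 7 // StrictMono s}) : ⋀[ℂ]^n V :=
  ⟨B n s, B_mem n s⟩

def basisExt (n : ℕ) : Module.Basis {s : Fin n → Fin 7 // StrictMono s} ℂ (⋀[ℂ]^n V) := by
  apply Module.Basis.mk (v := Bsub n)
  · apply LinearIndependent.of_comp (⋀[ℂ]^n V).subtype
    exact linIndep_B n
  · intro x _
    have hx : (x : ExteriorAlgebra ℂ V) ∈ Submodule.span ℂ (Set.range (B n)) := by
      rw [span_B n]; exact x.2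
    have key : Submodule.map (⋀[ℂ]^n V).subtype (Submodule.span ℂ (Set.range (Bsub n)))
        = Submodule.span ℂ (Set.range (B n)) := by
      rw [Submodule.map_span, ← Set.range_comp]
      rfl
    rw [← key] at hx
    obtain ⟨y, hy, hxy⟩ := hx
    have : y = x := Subtype.val_injective hxy
    exact this ▸ hy

lemma finrank_ext (n : ℕ) :
    Module.finrank ℂ (⋀[ℂ]^n V) = Fintype.card {s : Fin n → Fin 7 // StrictMono s} :=
  (Module.finrank_eq_card_basis (basisExt n))

/-! ### Dimensions -/

lemma card2 : Fintype.card {s : Fin 2 → Fin 7 // StrictMono s} = 21 := by decide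

lemma succAbove_surj {s : Fin 6 → Fin 7} (hs : StrictMono s) :
    ∃ k : Fin 7, s = Fin.succAbove k := by
  classical
  have hcard : (Finset.univ.image s)ᶜ.card = 1 := by
    rw [Finset.card_compl, Finset.card_image_of_injective _ hs.injective]
    simp
  obtain ⟨k, hk⟩ := Finset.card_eq_one.1 hcard
  refine ⟨k, ?_⟩
  haveI : WellFoundedLT (Fin 6) := inferInstance
  refine (hs.range_inj (Fin.strictMono_succAbove k)).1 ?_
  rw [Fin.range_succAbove]
  have h1 : Set.range s = ↑(Finset.univ.image s) := by simp [Finset.coe_image, Set.image_univ]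
  rw [h1]
  have h2 := congrArg (fun t : Finset (Fin 7) => (↑tᶜ : Set (Fin 7))) hk
  simp only [Finset.coe_compl, Finset.coe_singleton] at h2
  rw [← compl_compl (↑(Finset.univ.image s) : Set (Fin 7)), h2]

lemma card6 : Fintype.card {s : Fin 6 → Fin 7 // StrictMono s} = 7 := by
  have hbij : Function.Bijective (fun k : Fin 7 =>
      (⟨Fin.succAbove k, Fin.strictMono_succAbove k⟩ : {s : Fin 6 → Fin 7 // StrictMono s})) := by
    constructor
    · intro i j hij
      exact Fin.succAbove_left_injective (congrArg Subtype.val hij)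
    · rintro ⟨s, hs⟩
      obtain ⟨k, rfl⟩ := succAbove_surj hs
      exact ⟨k, rfl⟩
  rw [← Fintype.card_of_bijective hbij, Fintype.card_fin]

instance : FiniteDimensional ℂ (⋀[ℂ]^2 V) := Module.Basis.finiteDimensional_of_finite (basisExt 2)

lemma finrank2 : Module.finrank ℂ (⋀[ℂ]^2 V) = 21 := by rw [finrank_ext 2, card2]

lemma finrank6 : Module.finrank ℂ (⋀[ℂ]^6 V) = 7 := by rw [finrank_ext 6, card6]

/-! ### Membership lemmas -/

lemma mem2 (i j : Fin 7) : e i * e j ∈ ⋀[ℂ]^2 V := by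
  show _ ∈ LinearMap.range (ι ℂ : V →ₗ[ℂ] _) ^ 2
  rw [pow_two]
  exact Submodule.mul_mem_mul ⟨_, rfl⟩ ⟨_, rfl⟩

lemma mem4 (i j k l : Fin 7) : e i * e j * e k * e l ∈ ⋀[ℂ]^4 V := by
  show _ ∈ LinearMap.range (ι ℂ : V →ₗ[ℂ] _) ^ 4
  rw [show (4:ℕ) = 3+1 from rfl, pow_succ, show (3:ℕ) = 2+1 from rfl, pow_succ, pow_two]
  exact Submodule.mul_mem_mul (Submodule.mul_mem_mul
    (Submodule.mul_mem_mul ⟨_, rfl⟩ ⟨_, rfl⟩) ⟨_, rfl⟩) ⟨_, rfl⟩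

lemma ω₀_mem : ω₀ ∈ ⋀[ℂ]^4 V := by
  rw [ω₀]
  exact Submodule.add_mem _ (Submodule.add_mem _ (Submodule.add_mem _
    (mem4 0 1 2 6) (mem4 3 4 5 6)) (mem4 1 2 4 5)) (mem4 0 2 3 5)

/-! ### Product form of the basis 6-vectors -/

lemma ιMulti6 (t : Fin 6 → Fin 7) : ιMulti ℂ 6 (b ∘ t) =
    e (t 0) * (e (t 1) * (e (t 2) * (e (t 3) * (e (t 4) * e (t 5))))) := by
  rw [ιMulti_apply]
  simp only [List.ofFn_succ, List.ofFn_zero, List.prod_cons, List.prod_nil, mul_one]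
  norm_num [e, b, Fin.succ, Fin.isValue]
  rfl

lemma B6_eq (k : Fin 7) (a0 a1 a2 a3 a4 a5 : Fin 7)
    (h : Fin.succAbove k = ![a0, a1, a2, a3, a4, a5]) :
    ιMulti ℂ 6 (b ∘ Fin.succAbove k) =
      e a0 * (e a1 * (e a2 * (e a3 * (e a4 * e a5)))) := by
  rw [ιMulti6, h]
  rfl

/-! ### The main theorem pieces -/

abbrev f : ⋀[ℂ]^2 V →ₗ[ℂ] ExteriorAlgebra ℂ V :=
  (LinearMap.mulRight ℂ ω₀).comp (⋀[ℂ]^2 V).subtype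

lemma range_le : LinearMap.range f ≤ ⋀[ℂ]^6 V := by
  rintro _ ⟨⟨w, hw⟩, rfl⟩
  show w * ω₀ ∈ LinearMap.range (ι ℂ : V →ₗ[ℂ] _) ^ 6
  rw [show (6:ℕ) = 2+4 from rfl, pow_add]
  exact Submodule.mul_mem_mul hw ω₀_mem

set_option maxHeartbeats 1000000 in
lemma prod0 : (e 1 * e 2) * ω₀ = e 1 * (e 2 * (e 3 * (e 4 * (e 5 * e 6)))) := by
  simp (config := { decide := true }) [ω₀, mul_add, mul_assoc, e_sq, e_sq', e_swap, e_swap',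
    mul_neg, neg_neg]

set_option maxHeartbeats 1000000 in
lemma prod1 : (e 0 * e 2) * ω₀ = e 0 * (e 2 * (e 3 * (e 4 * (e 5 * e 6)))) := by
  simp (config := { decide := true }) [ω₀, mul_add, mul_assoc, e_sq, e_sq', e_swap, e_swap',
    mul_neg, neg_neg]

set_option maxHeartbeats 1000000 in
lemma prod2 : (e 0 * e 1) * ω₀ = e 0 * (e 1 * (e 3 * (e 4 * (e 5 * e 6)))) := by
  simp (config := { decide := true }) [ω₀, mul_add, mul_assoc, e_sq, e_sq', e_swap, e_swap',
    mul_neg, neg_neg]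

set_option maxHeartbeats 1000000 in
lemma prod3 : (e 4 * e 5) * ω₀ = e 0 * (e 1 * (e 2 * (e 4 * (e 5 * e 6)))) := by
  simp (config := { decide := true }) [ω₀, mul_add, mul_assoc, e_sq, e_sq', e_swap, e_swap',
    mul_neg, neg_neg]

set_option maxHeartbeats 1000000 in
lemma prod4 : (e 3 * e 5) * ω₀ = e 0 * (e 1 * (e 2 * (e 3 * (e 5 * e 6)))) := by
  simp (config := { decide := true }) [ω₀, mul_add, mul_assoc, e_sq, e_sq', e_swap, e_swap',
    mul_neg, neg_neg]

set_option maxHeartbeats 1000000 in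
lemma prod5 : (e 3 * e 4) * ω₀ = e 0 * (e 1 * (e 2 * (e 3 * (e 4 * e 6)))) := by
  simp (config := { decide := true }) [ω₀, mul_add, mul_assoc, e_sq, e_sq', e_swap, e_swap',
    mul_neg, neg_neg]

set_option maxHeartbeats 1000000 in
lemma prod6 : (e 0 * e 3) * ω₀ = e 0 * (e 1 * (e 2 * (e 3 * (e 4 * e 5)))) := by
  simp (config := { decide := true }) [ω₀, mul_add, mul_assoc, e_sq, e_sq', e_swap, e_swap',
    mul_neg, neg_neg]

set_option maxHeartbeats 1000000 in
lemma le_range : ⋀[ℂ]^6 V ≤ LinearMap.range f := by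
  rw [← span_B 6, Submodule.span_le]
  rintro _ ⟨s, rfl⟩
  obtain ⟨k, hk⟩ := succAbove_surj s.2
  have hB : B 6 s = ιMulti ℂ 6 (b ∘ Fin.succAbove k) := by rw [B, hk]
  rw [SetLike.mem_coe, LinearMap.mem_range]
  simp only [LinearMap.coe_comp, Function.comp_apply, Submodule.coe_subtype,
    LinearMap.mulRight_apply]
  fin_cases k
  · exact ⟨⟨e 1 * e 2, mem2 1 2⟩, by
      rw [hB, B6_eq _ 1 2 3 4 5 6 (by decide)]
      exact prod0⟩
  · exact ⟨⟨e 0 * e 2, mem2 0 2⟩, by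
      rw [hB, B6_eq _ 0 2 3 4 5 6 (by decide)]
      exact prod1⟩
  · exact ⟨⟨e 0 * e 1, mem2 0 1⟩, by
      rw [hB, B6_eq _ 0 1 3 4 5 6 (by decide)]
      exact prod2⟩
  · exact ⟨⟨e 4 * e 5, mem2 4 5⟩, by
      rw [hB, B6_eq _ 0 1 2 4 5 6 (by decide)]
      exact prod3⟩
  · exact ⟨⟨e 3 * e 5, mem2 3 5⟩, by
      rw [hB, B6_eq _ 0 1 2 3 5 6 (by decide)]
      exact prod4⟩
  · exact ⟨⟨e 3 * e 4, mem2 3 4⟩, by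
      rw [hB, B6_eq _ 0 1 2 3 4 6 (by decide)]
      exact prod5⟩
  · exact ⟨⟨e 0 * e 3, mem2 0 3⟩, by
      rw [hB, B6_eq _ 0 1 2 3 4 5 (by decide)]
      exact prod6⟩

lemma range_eq : LinearMap.range f = ⋀[ℂ]^6 V := le_antisymm range_le le_range

end Stmt9

open Stmt9 in
theorem stmt_9 :
    LinearMap.range ((LinearMap.mulRight ℂ ω₀).comp (⋀[ℂ]^2 (Fin 7 → ℂ)).subtype)
      = ⋀[ℂ]^6 (Fin 7 → ℂ) ∧
    Module.finrank ℂ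
      (LinearMap.ker ((LinearMap.mulRight ℂ ω₀).comp (⋀[ℂ]^2 (Fin 7 → ℂ)).subtype)) = 14 := by
  refine ⟨range_eq, ?_⟩
  have h := LinearMap.finrank_range_add_finrank_ker
    ((LinearMap.mulRight ℂ ω₀).comp (⋀[ℂ]^2 (Fin 7 → ℂ)).subtype)
  rw [show LinearMap.range ((LinearMap.mulRight ℂ ω₀).comp (⋀[ℂ]^2 (Fin 7 → ℂ)).subtype)
      = ⋀[ℂ]^6 (Fin 7 → ℂ) from range_eq, finrank6, finrank2] at h
  omega

end
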